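/- arXiv:2502.08605 — 2 statements merged into one kernel-verified Lean document; each statement's English description precedes it below -/
import Mathlib

section
/- For an unweighted graph, the Ollivier-Ricci curvature of an edge (x,y), defined as κ(x,y) = 1 - W₁(m_x, m_y)/d(x,y) where m_x is the uniform probability measure on the neighbors of x (with δ=0), satisfies the upper bound κ(x,y) ≤ #(x,y)/max(d_x, d_y), where #(x,y) is the number of triangles containing edge (x,y) and d_x, d_y are the degrees of x and y. -/
open Finset

/-- Wasserstein-1 distance between two finitely-supported measures (given as real-valued
functions) on the vertex set of a graph, with respect to the shortest-path metric,
defined as the infimum of transport costs over all couplings. -/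
noncomputable def W1 {V : Type*} [Fintype V] (G : SimpleGraph V) (μ ν : V → ℝ) : ℝ :=
  sInf { c : ℝ | ∃ π : V → V → ℝ, (∀ a b, 0 ≤ π a b) ∧
    (∀ a, ∑ b, π a b = μ a) ∧ (∀ b, ∑ a, π a b = ν b) ∧
    c = ∑ a, ∑ b, π a b * (G.dist a b : ℝ) }

/-- Uniform probability measure on the neighbours of `x` (lazy parameter δ = 0). -/
noncomputable def mUnif {V : Type*} [Fintype V] [DecidableEq V] (G : SimpleGraph V) [DecidableRel G.Adj]
    (x : V) : V → ℝ :=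
  fun z => if z ∈ G.neighborFinset x then 1 / (G.degree x : ℝ) else 0

/-- Jost–Liu upper bound: for an edge (x,y) of a finite simple connected unweighted graph,
the Ollivier-Ricci curvature κ(x,y) = 1 - W₁(m_x, m_y)/d(x,y) (here d(x,y) = 1) is at most
#(x,y)/max(d_x, d_y), where #(x,y) is the number of triangles containing the edge. -/
theorem orc_upper_bound {V : Type*} [Fintype V] [DecidableEq V]
    (G : SimpleGraph V) [DecidableRel G.Adj] (hconn : G.Connected)
    (x y : V) (hxy : G.Adj x y) :
    1 - W1 G (mUnif G x) (mUnif G y) / (G.dist x y : ℝ) ≤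
      ((G.neighborFinset x ∩ G.neighborFinset y).card : ℝ) /
        (max (G.degree x) (G.degree y) : ℝ) := by
  classical
  have hdx : 0 < G.degree x := by rw [G.degree_pos_iff_exists_adj]; exact ⟨y, hxy⟩
  have hdy : 0 < G.degree y := by rw [G.degree_pos_iff_exists_adj]; exact ⟨x, hxy.symm⟩
  have hdxR : (0:ℝ) < G.degree x := by exact_mod_cast hdx
  have hdyR : (0:ℝ) < G.degree y := by exact_mod_cast hdy
  set μ : V → ℝ := mUnif G x with hμ
  set ν : V → ℝ := mUnif G y with hν
  set D : ℝ := max (G.degree x : ℝ) (G.degree y : ℝ) with hD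
  have hDpos : 0 < D := lt_max_of_lt_left hdxR
  set t : ℝ := ((G.neighborFinset x ∩ G.neighborFinset y).card : ℝ) / D with ht
  have hμnn : ∀ a, 0 ≤ μ a := by
    intro a; simp only [hμ, mUnif]; split <;> positivity
  have hνnn : ∀ a, 0 ≤ ν a := by
    intro a; simp only [hν, mUnif]; split <;> positivity
  have hsum : ∀ (v : V) (hv : 0 < G.degree v), ∑ a, mUnif G v a = 1 := by
    intro v hv
    have hvR : (0:ℝ) < G.degree v := by exact_mod_cast hv
    simp only [mUnif]
    rw [Finset.sum_ite_mem, Finset.univ_inter, Finset.sum_const,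
      SimpleGraph.card_neighborFinset_eq_degree, nsmul_eq_mul]
    field_simp
  have hμsum : ∑ a, μ a = 1 := hsum x hdx
  have hνsum : ∑ a, ν a = 1 := hsum y hdy
  have hmin : ∀ a, min (μ a) (ν a) =
      if a ∈ G.neighborFinset x ∩ G.neighborFinset y then 1 / D else 0 := by
    intro a
    by_cases h1 : a ∈ G.neighborFinset x <;> by_cases h2 : a ∈ G.neighborFinset y
    · have hm : a ∈ G.neighborFinset x ∩ G.neighborFinset y := Finset.mem_inter.mpr ⟨h1, h2⟩
      simp only [hμ, hν, mUnif, if_pos h1, if_pos h2, if_pos hm, hD]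
      rcases le_total (G.degree x : ℝ) (G.degree y : ℝ) with h | h
      · rw [max_eq_right h, min_eq_right (one_div_le_one_div_of_le hdxR h)]
      · rw [max_eq_left h, min_eq_left (one_div_le_one_div_of_le hdyR h)]
    · have hm : a ∉ G.neighborFinset x ∩ G.neighborFinset y := by
        simp [Finset.mem_inter, h2]
      simp only [hμ, hν, mUnif, if_pos h1, if_neg h2, if_neg hm]
      exact min_eq_right (by positivity)
    · have hm : a ∉ G.neighborFinset x ∩ G.neighborFinset y := by
        simp [Finset.mem_inter, h1]
      simp only [hμ, hν, mUnif, if_neg h1, if_pos h2, if_neg hm]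
      exact min_eq_left (by positivity)
    · have h1' : ¬ G.Adj x a := by simpa using h1
      have h2' : ¬ G.Adj y a := by simpa using h2
      simp [hμ, hν, mUnif, h1', h2']
  have hminsum : ∑ a, min (μ a) (ν a) = t := by
    rw [ht]
    simp only [hmin]
    rw [Finset.sum_ite_mem, Finset.univ_inter, Finset.sum_const, nsmul_eq_mul]
    ring
  -- W1 lower bound
  have hW1 : 1 - t ≤ W1 G μ ν := by
    apply le_csInf
    · refine ⟨∑ a, ∑ b, (μ a * ν b) * (G.dist a b : ℝ), fun a b => μ a * ν b, ?_, ?_, ?_, rfl⟩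
      · intro a b; exact mul_nonneg (hμnn a) (hνnn b)
      · intro a; rw [← Finset.mul_sum, hνsum, mul_one]
      · intro b; rw [← Finset.sum_mul, hμsum, one_mul]
    · rintro c ⟨π, hπnn, hrow, hcol, rfl⟩
      have hdiag : ∀ a, π a a ≤ min (μ a) (ν a) := by
        intro a
        refine le_min ?_ ?_
        · rw [← hrow a]
          exact Finset.single_le_sum (fun b _ => hπnn a b) (Finset.mem_univ a)
        · rw [← hcol a]
          exact Finset.single_le_sum (fun b _ => hπnn b a) (Finset.mem_univ a)
      have hdiagsum : ∑ a, π a a ≤ t := by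
        rw [← hminsum]
        exact Finset.sum_le_sum fun a _ => hdiag a
      have hterm : ∀ a b, π a b - (if a = b then π a b else 0) ≤ π a b * (G.dist a b : ℝ) := by
        intro a b
        by_cases h : a = b
        · subst h
          have h0 : π a a - (if a = a then π a a else 0) = 0 := by simp
          rw [h0]
          exact mul_nonneg (hπnn a a) (Nat.cast_nonneg _)
        · simp only [if_neg h]
          have : (1:ℝ) ≤ (G.dist a b : ℝ) := by
            exact_mod_cast hconn.pos_dist_of_ne h
          nlinarith [hπnn a b]
      calc 1 - t ≤ 1 - ∑ a, π a a := by linarith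
        _ = ∑ a, ∑ b, (π a b - (if a = b then π a b else 0)) := by
            have hin : ∀ a : V, ∑ b, (π a b - (if a = b then π a b else 0)) = μ a - π a a := by
              intro a
              rw [Finset.sum_sub_distrib, hrow a, Finset.sum_ite_eq]
              simp
            simp only [hin]
            rw [Finset.sum_sub_distrib, hμsum]
        _ ≤ ∑ a, ∑ b, π a b * (G.dist a b : ℝ) :=
            Finset.sum_le_sum fun a _ => Finset.sum_le_sum fun b _ => hterm a b
  have hd1 : G.dist x y = 1 := SimpleGraph.dist_eq_one_iff_adj.mpr hxy
  rw [hd1]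
  push_cast
  rw [div_one]
  have ht' : ((G.neighborFinset x ∩ G.neighborFinset y).card : ℝ) /
      (max (G.degree x) (G.degree y) : ℝ) = t := by
    rw [ht, hD]
  linarith [hW1, ht'.ge, ht'.le]
end

section
/- For an unweighted graph, the Ollivier-Ricci curvature of an edge (x,y) satisfies the lower bound κ(x,y) ≥ -(1 - 1/d_x - 1/d_y - #(x,y)/min(d_x,d_y))₊ - (1 - 1/d_x - 1/d_y - #(x,y)/max(d_x,d_y))₊ + #(x,y)/max(d_x,d_y), where (a)₊ = max(a,0). -/
open Finset

set_option maxHeartbeats 1000000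

private lemma arith_bound (p q t Am : ℝ) (hq : 0 < q) (hpq : q ≤ p)
    (hAmdef : Am = 1 - (t + 1) * p) (ht : 0 ≤ t) (htq : (t + 1) * q ≤ 1) :
    q + ((Am - min q Am) * 3 + ((p - (q - min q Am - min (q - min q Am) (t * (p - q)))) * 1
      + (t * (p - q) - min (q - min q Am) (t * (p - q))) * 2)) ≤
      1 + max (1 - p - q - t * p) 0 + max (1 - p - q - t * q) 0 - t * q := by
  have hTc : 0 ≤ t * (p - q) := mul_nonneg ht (by linarith)
  have hm1 := le_max_left (1 - p - q - t * p) (0:ℝ)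
  have hm1' := le_max_right (1 - p - q - t * p) (0:ℝ)
  have hm2 := le_max_left (1 - p - q - t * q) (0:ℝ)
  have hm2' := le_max_right (1 - p - q - t * q) (0:ℝ)
  rcases le_total q Am with h1 | h1
  · rw [min_eq_left h1]
    rcases le_total (q - q) (t * (p - q)) with h2 | h2
    · rw [min_eq_left h2]; nlinarith
    · rw [min_eq_right h2]; nlinarith
  · rw [min_eq_right h1]
    rcases le_total (q - Am) (t * (p - q)) with h2 | h2
    · rw [min_eq_left h2]; nlinarith
    · rw [min_eq_right h2]; nlinarith

lemma coupling_bound {V : Type*} [Fintype V] [DecidableEq V]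
    (G : SimpleGraph V) [DecidableRel G.Adj] (hconn : G.Connected)
    (x y : V) (hxy : G.Adj x y) (hdeg : G.degree x ≤ G.degree y) :
    W1 G (mUnif G x) (mUnif G y) ≤
      1 + max (1 - 1/(G.degree x : ℝ) - 1/(G.degree y : ℝ)
          - ((G.neighborFinset x ∩ G.neighborFinset y).card : ℝ) / (G.degree x : ℝ)) 0
        + max (1 - 1/(G.degree x : ℝ) - 1/(G.degree y : ℝ)
          - ((G.neighborFinset x ∩ G.neighborFinset y).card : ℝ) / (G.degree y : ℝ)) 0
        - ((G.neighborFinset x ∩ G.neighborFinset y).card : ℝ) / (G.degree y : ℝ) := by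
  classical
  set Nx := G.neighborFinset x with hNx
  set Ny := G.neighborFinset y with hNy
  set T : Finset V := Nx ∩ Ny with hT
  have hyNx : y ∈ Nx := by rw [hNx, SimpleGraph.mem_neighborFinset]; exact hxy
  have hxNy : x ∈ Ny := by rw [hNy, SimpleGraph.mem_neighborFinset]; exact hxy.symm
  have hxNx : x ∉ Nx := by rw [hNx, SimpleGraph.mem_neighborFinset]; exact G.irrefl
  have hyNy : y ∉ Ny := by rw [hNy, SimpleGraph.mem_neighborFinset]; exact G.irrefl
  have hyT : y ∉ T := fun h => hyNy (mem_inter.mp h).2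
  have hxT : x ∉ T := fun h => hxNx (mem_inter.mp h).1
  have hTNx : T ⊆ Nx := inter_subset_left
  have hTNy : T ⊆ Ny := inter_subset_right
  set A : Finset V := Nx \ insert y T with hA
  set B : Finset V := Ny \ insert x T with hB
  have hyTsub : insert y T ⊆ Nx := insert_subset hyNx hTNx
  have hxTsub : insert x T ⊆ Ny := insert_subset hxNy hTNy
  have hNxcard : Nx.card = G.degree x := rfl
  have hNycard : Ny.card = G.degree y := rfl
  set dx : ℝ := (G.degree x : ℝ) with hdxdef
  set dy : ℝ := (G.degree y : ℝ) with hdydef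
  have hdx0 : 0 < dx := by
    rw [hdxdef]; exact_mod_cast (G.degree_pos_iff_exists_adj x).mpr ⟨y, hxy⟩
  have hdy0 : 0 < dy := by
    rw [hdydef]; exact_mod_cast (G.degree_pos_iff_exists_adj y).mpr ⟨x, hxy.symm⟩
  set p : ℝ := 1 / dx with hpdef
  set q : ℝ := 1 / dy with hqdef
  set tR : ℝ := (T.card : ℝ) with htRdef
  have hp0 : 0 < p := by positivity
  have hq0 : 0 < q := by positivity
  have hqp : q ≤ p := by
    rw [hpdef, hqdef]
    refine one_div_le_one_div_of_le hdx0 ?_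
    rw [hdxdef, hdydef]; exact_mod_cast hdeg
  have htR0 : 0 ≤ tR := Nat.cast_nonneg _
  -- cards
  have hAcard : A.card + (T.card + 1) = G.degree x := by
    rw [hA, card_sdiff_of_subset hyTsub, card_insert_of_notMem hyT]
    rw [← card_insert_of_notMem hyT]
    exact Nat.sub_add_cancel (card_le_card hyTsub)
  have hAR : (A.card : ℝ) = dx - tR - 1 := by
    have h2 : (A.card : ℝ) + ((T.card : ℝ) + 1) = (G.degree x : ℝ) := by exact_mod_cast hAcard
    rw [htRdef, hdxdef]; linarith
  have hBcard : B.card + (T.card + 1) = G.degree y := by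
    rw [hB, card_sdiff_of_subset hxTsub, card_insert_of_notMem hxT]
    rw [← card_insert_of_notMem hxT]
    exact Nat.sub_add_cancel (card_le_card hxTsub)
  have hBR : (B.card : ℝ) = dy - tR - 1 := by
    have h2 : (B.card : ℝ) + ((T.card : ℝ) + 1) = (G.degree y : ℝ) := by exact_mod_cast hBcard
    rw [htRdef, hdydef]; linarith
  have htdy : tR + 1 ≤ dy := by linarith [Nat.cast_nonneg (α := ℝ) B.card, hBR]
  have hdxp : dx * p = 1 := by rw [hpdef]; field_simp
  have hdyq : dy * q = 1 := by rw [hqdef]; field_simp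
  -- the transported amounts
  set Am : ℝ := (A.card : ℝ) * p with hAmdef
  set Tc : ℝ := tR * (p - q) with hTcdef
  set a1 : ℝ := min q Am with ha1def
  set a2 : ℝ := min (q - a1) Tc with ha2def
  set a3 : ℝ := q - a1 - a2 with ha3def
  have hAm0 : 0 ≤ Am := mul_nonneg (Nat.cast_nonneg _) hp0.le
  have hTc0 : 0 ≤ Tc := mul_nonneg htR0 (by linarith)
  have ha1q : a1 ≤ q := min_le_left _ _
  have ha1Am : a1 ≤ Am := min_le_right _ _
  have ha10 : 0 ≤ a1 := le_min hq0.le hAm0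
  have ha2' : a2 ≤ q - a1 := min_le_left _ _
  have ha2Tc : a2 ≤ Tc := min_le_right _ _
  have ha20 : 0 ≤ a2 := le_min (by linarith) hTc0
  have ha30 : 0 ≤ a3 := by rw [ha3def]; linarith
  have hA0 : (A.card : ℝ) = 0 → a1 = 0 := by
    intro h
    rw [ha1def, hAmdef, h, zero_mul]
    exact min_eq_right hq0.le
  have hT0 : tR = 0 → a2 = 0 := by
    intro h
    rw [ha2def, hTcdef, h, zero_mul]
    exact min_eq_right (by linarith)
  -- the coupling
  set ξ : V → ℝ := fun u =>
    if u ∈ A then a1 / (A.card : ℝ) else if u ∈ T then a2 / tR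
      else if u = y then a3 else 0 with hxidef
  set β : V → ℝ := fun u => p - ξ u - (if u ∈ T then q else 0) with hbetadef
  set π : V → V → ℝ := fun u v => (if u ∈ Nx then (1:ℝ) else 0) *
    ((if v = x then ξ u else 0) + (if v ∈ B then β u / (B.card : ℝ) else 0) +
      (if u = v ∧ v ∈ T then q else 0)) with hpidef
  have hAnoty : ∀ u ∈ A, u ≠ y ∧ u ∉ T := by
    intro u hu
    have := (mem_sdiff.mp hu).2
    rw [mem_insert] at this
    push_neg at this
    exact this
  have hTnotA : ∀ u ∈ T, u ∉ A := by
    intro u hu hA'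
    exact (hAnoty u hA').2 hu
  have hxiA : ∀ u ∈ A, ξ u = a1 / (A.card : ℝ) := by
    intro u hu; rw [hxidef]; simp only [if_pos hu]
  have hxiT : ∀ u ∈ T, ξ u = a2 / tR := by
    intro u hu; rw [hxidef]; simp only [if_neg (hTnotA u hu), if_pos hu]
  have hynA : y ∉ A := fun h => (hAnoty y h).1 rfl
  have hxiy : ξ y = a3 := by
    rw [hxidef]; simp only [if_neg hynA, if_neg hyT]; simp
  have hxinn : ∀ u, 0 ≤ ξ u := by
    intro u
    rw [hxidef]
    dsimp only
    split_ifs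
    · exact div_nonneg ha10 (Nat.cast_nonneg _)
    · exact div_nonneg ha20 htR0
    · exact ha30
    · exact le_refl 0
  have hsplit : ∀ f : V → ℝ, ∑ u ∈ Nx, f u = ∑ u ∈ A, f u + (f y + ∑ u ∈ T, f u) := by
    intro f
    rw [← sum_sdiff hyTsub, sum_insert hyT, ← hA]
  have hsumA : ∑ u ∈ A, ξ u = a1 := by
    rw [sum_congr rfl hxiA, sum_const, nsmul_eq_mul]
    rcases eq_or_ne ((A.card : ℝ)) 0 with h | h
    · rw [h, zero_mul, hA0 h]
    · rw [mul_comm, div_mul_cancel₀ _ h]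
  have hsumT : ∑ u ∈ T, ξ u = a2 := by
    rw [sum_congr rfl hxiT, sum_const, nsmul_eq_mul, ← htRdef]
    rcases eq_or_ne tR 0 with h | h
    · rw [h, zero_mul, hT0 h]
    · rw [mul_comm, div_mul_cancel₀ _ h]
  have hsumXi : ∑ u ∈ Nx, ξ u = q := by
    rw [hsplit, hsumA, hsumT, hxiy, ha3def]; ring
  have hsumIteT : ∑ u ∈ Nx, (if u ∈ T then q else 0) = tR * q := by
    rw [Finset.sum_ite_mem, inter_eq_right.mpr hTNx, sum_const, nsmul_eq_mul, htRdef]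
  have hsumBeta : ∑ u ∈ Nx, β u = (B.card : ℝ) * q := by
    have h1 : ∑ u ∈ Nx, β u = dx * p - q - tR * q := by
      rw [hbetadef]
      dsimp only
      rw [sum_sub_distrib, sum_sub_distrib, hsumXi, hsumIteT, sum_const, nsmul_eq_mul,
        hNxcard, ← hdxdef]
    rw [h1, hBR]
    linear_combination hdxp - hdyq
  have hbetann : ∀ u ∈ Nx, 0 ≤ β u := by
    intro u hu
    rw [hbetadef]
    dsimp only
    by_cases huA : u ∈ A
    · have hcpos : 0 < (A.card : ℝ) := by exact_mod_cast card_pos.mpr ⟨u, huA⟩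
      rw [hxiA u huA, if_neg (hAnoty u huA).2]
      have : a1 / (A.card : ℝ) ≤ p := by
        rw [div_le_iff₀ hcpos]
        calc a1 ≤ Am := ha1Am
        _ = p * (A.card : ℝ) := by rw [hAmdef]; ring
      linarith
    · have huyT : u ∈ insert y T := by
        by_contra hc
        exact huA (mem_sdiff.mpr ⟨hu, hc⟩)
      rcases mem_insert.mp huyT with rfl | huT
      · rw [hxiy, if_neg hyT, ha3def]; linarith
      · have htpos : 0 < tR := by
          rw [htRdef]; exact_mod_cast card_pos.mpr ⟨u, huT⟩
        rw [hxiT u huT, if_pos huT]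
        have : a2 / tR ≤ p - q := by
          rw [div_le_iff₀ htpos]
          calc a2 ≤ Tc := ha2Tc
          _ = (p - q) * tR := by rw [hTcdef]; ring
        linarith
  have hbeta0 : (B.card : ℝ) = 0 → ∀ u ∈ Nx, β u = 0 := by
    intro h u hu
    have hsum0 : ∑ u ∈ Nx, β u = 0 := by rw [hsumBeta, h, zero_mul]
    exact (Finset.sum_eq_zero_iff_of_nonneg hbetann).mp hsum0 u hu
  have hrow : ∀ u, ∑ v, π u v = mUnif G x u := by
    intro u
    by_cases hu : u ∈ Nx
    · have hmu : mUnif G x u = p := by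
        simp only [mUnif]
        rw [← hNx, if_pos hu, ← hdxdef, ← hpdef]
      rw [hpidef]
      dsimp only
      rw [if_pos hu]
      simp only [one_mul]
      rw [sum_add_distrib, sum_add_distrib]
      have h1 : ∑ v, (if v = x then ξ u else 0) = ξ u := Fintype.sum_ite_eq' x (fun _ => ξ u)
      have h2 : ∑ v, (if v ∈ B then β u / (B.card : ℝ) else 0) = β u := by
        rw [Fintype.sum_ite_mem, sum_const, nsmul_eq_mul]
        rcases eq_or_ne ((B.card : ℝ)) 0 with h | h
        · rw [h, zero_mul, hbeta0 h u hu]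
        · rw [mul_comm, div_mul_cancel₀ _ h]
      have h3 : ∑ v, (if u = v ∧ v ∈ T then q else 0) = if u ∈ T then q else 0 := by
        have key : ∀ v, (if u = v ∧ v ∈ T then q else 0)
            = (if v = u then (if u ∈ T then q else 0) else 0) := by
          intro v
          by_cases h : v = u
          · subst h; by_cases h2 : v ∈ T <;> simp [h2]
          · have hne : ¬(u = v ∧ v ∈ T) := fun hc => h hc.1.symm
            simp [hne, h]
        rw [sum_congr rfl (fun v _ => key v)]
        exact Fintype.sum_ite_eq' u _
      rw [h1, h2, h3, hmu, hbetadef]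
      dsimp only
      ring
    · have hmu : mUnif G x u = 0 := by
        simp only [mUnif]
        rw [← hNx, if_neg hu]
      rw [hmu]
      apply sum_eq_zero
      intro v _
      rw [hpidef]
      dsimp only
      rw [if_neg hu, zero_mul]
  have hcol : ∀ v, ∑ u, π u v = mUnif G y v := by
    intro v
    have hmu : mUnif G y v = if v ∈ Ny then q else 0 := by
      simp only [mUnif]
      rfl
    have hsum : ∑ u, π u v = (if v = x then q else 0) + (if v ∈ B then q else 0)
        + (if v ∈ T then q else 0) := by
      have hpi2 : ∀ u, π u v = if u ∈ Nx then
          ((if v = x then ξ u else 0) + (if v ∈ B then β u / (B.card : ℝ) else 0) +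
            (if u = v ∧ v ∈ T then q else 0)) else 0 := by
        intro u
        rw [hpidef]
        dsimp only
        by_cases hu : u ∈ Nx
        · rw [if_pos hu, if_pos hu, one_mul]
        · rw [if_neg hu, if_neg hu, zero_mul]
      rw [sum_congr rfl (fun u _ => hpi2 u), Fintype.sum_ite_mem,
        sum_add_distrib, sum_add_distrib]
      congr 1
      · congr 1
        · by_cases h : v = x
          · simp only [if_pos h, hsumXi]
          · simp only [if_neg h, sum_const_zero]
        · by_cases h : v ∈ B
          · simp only [if_pos h]
            rw [← sum_div, hsumBeta]
            have hc : (B.card : ℝ) ≠ 0 := by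
              exact_mod_cast (card_pos.mpr ⟨v, h⟩).ne'
            rw [mul_comm, mul_div_assoc, div_self hc, mul_one]
          · simp only [if_neg h, sum_const_zero]
      · by_cases h : v ∈ T
        · simp only [h, and_true]
          have : ∑ u ∈ Nx, (if u = v then q else 0) = q := by
            rw [Finset.sum_ite_eq' Nx v (fun _ => q), if_pos (hTNx h)]
          exact this
        · simp only [h, and_false, if_false, sum_const_zero, if_neg h]
    rw [hsum, hmu]
    by_cases h1 : v = x
    · subst h1
      have hvB : v ∉ B := fun hc => (mem_sdiff.mp hc).2 (mem_insert_self v T)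
      rw [if_pos rfl, if_neg hvB, if_neg hxT, if_pos hxNy]
      ring
    · by_cases h2 : v ∈ B
      · have hvNy : v ∈ Ny := (mem_sdiff.mp h2).1
        have hvT : v ∉ T := fun hc => (mem_sdiff.mp h2).2 (mem_insert_of_mem hc)
        rw [if_neg h1, if_pos h2, if_neg hvT, if_pos hvNy]
        ring
      · by_cases h3 : v ∈ T
        · rw [if_neg h1, if_neg h2, if_pos h3, if_pos (hTNy h3)]
          ring
        · have hvNy : v ∉ Ny := by
            intro hv
            have : v ∈ insert x T := by
              by_contra hc
              exact h2 (mem_sdiff.mpr ⟨hv, hc⟩)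
            rcases mem_insert.mp this with h | h
            · exact h1 h
            · exact h3 h
          rw [if_neg h1, if_neg h2, if_neg h3, if_neg hvNy]
          ring
  have hpinn : ∀ u v, 0 ≤ π u v := by
    intro u v
    rw [hpidef]
    dsimp only
    by_cases hu : u ∈ Nx
    · rw [if_pos hu, one_mul]
      refine add_nonneg (add_nonneg ?_ ?_) ?_
      · split_ifs
        · exact hxinn u
        · exact le_refl 0
      · split_ifs
        · exact div_nonneg (hbetann u hu) (Nat.cast_nonneg _)
        · exact le_refl 0
      · split_ifs
        · exact hq0.le
        · exact le_refl 0
    · rw [if_neg hu, zero_mul]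
  -- distance facts
  have hadjdist : ∀ {u w : V}, G.Adj u w → G.dist u w = 1 :=
    fun h => SimpleGraph.dist_eq_one_iff_adj.mpr h
  set cf : V → ℝ := fun u => if u = y then 1 else if u ∈ T then 2 else 3 with hcfdef
  have hcf0 : ∀ u, 0 ≤ cf u := by
    intro u; rw [hcfdef]; dsimp only; split_ifs <;> norm_num
  have hdB : ∀ u ∈ Nx, ∀ v ∈ B, ((G.dist u v : ℝ)) ≤ cf u := by
    intro u hu v hv
    have hvNy : v ∈ Ny := (mem_sdiff.mp hv).1
    have hyv : G.dist y v = 1 := hadjdist (by rwa [← SimpleGraph.mem_neighborFinset, ← hNy])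
    rw [hcfdef]
    dsimp only
    by_cases h1 : u = y
    · subst h1
      rw [if_pos rfl]
      exact_mod_cast le_of_eq hyv
    · rw [if_neg h1]
      by_cases h2 : u ∈ T
      · rw [if_pos h2]
        have huNy : u ∈ Ny := (mem_inter.mp h2).2
        have huy : G.dist u y = 1 := by
          rw [SimpleGraph.dist_comm]
          exact hadjdist (by rwa [← SimpleGraph.mem_neighborFinset, ← hNy])
        have htri := hconn.dist_triangle (u := u) (v := y) (w := v)
        rw [huy, hyv] at htri
        exact_mod_cast htri
      · rw [if_neg h2]
        have hux : G.dist u x = 1 := by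
          rw [SimpleGraph.dist_comm]
          exact hadjdist (by rwa [← SimpleGraph.mem_neighborFinset, ← hNx])
        have hxyd : G.dist x y = 1 := hadjdist hxy
        have htri1 := hconn.dist_triangle (u := u) (v := x) (w := v)
        have htri2 := hconn.dist_triangle (u := x) (v := y) (w := v)
        rw [hux] at htri1
        rw [hxyd, hyv] at htri2
        have : G.dist u v ≤ 3 := by omega
        exact_mod_cast this
  -- the inner cost bound
  have hinner : ∀ u ∈ Nx, ∑ v, π u v * (G.dist u v : ℝ) ≤ ξ u + β u * cf u := by
    intro u hu
    have hux : (G.dist u x : ℝ) = 1 := by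
      exact_mod_cast hadjdist (G.adj_symm (by rwa [← SimpleGraph.mem_neighborFinset, ← hNx]))
    have hexp : ∀ v, π u v * (G.dist u v : ℝ) =
        (if v = x then ξ u * (G.dist u v : ℝ) else 0)
        + (if v ∈ B then (β u / (B.card : ℝ)) * (G.dist u v : ℝ) else 0)
        + (if u = v ∧ v ∈ T then q * (G.dist u v : ℝ) else 0) := by
      intro v
      rw [hpidef]
      dsimp only
      rw [if_pos hu, one_mul, add_mul, add_mul]
      congr 1
      · congr 1
        · split_ifs <;> simp
        · split_ifs <;> simp
      · split_ifs <;> simp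
    rw [sum_congr rfl (fun v _ => hexp v), sum_add_distrib, sum_add_distrib]
    have h1 : ∑ v, (if v = x then ξ u * (G.dist u v : ℝ) else 0) = ξ u := by
      rw [Fintype.sum_ite_eq' x (fun v => ξ u * (G.dist u v : ℝ)), hux, mul_one]
    have h3 : ∑ v, (if u = v ∧ v ∈ T then q * (G.dist u v : ℝ) else 0) = 0 := by
      apply sum_eq_zero
      intro v _
      split_ifs with h
      · rw [← h.1, SimpleGraph.dist_self]
        simp
      · rfl
    have h2 : ∑ v, (if v ∈ B then (β u / (B.card : ℝ)) * (G.dist u v : ℝ) else 0)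
        ≤ β u * cf u := by
      rw [Fintype.sum_ite_mem]
      calc ∑ v ∈ B, (β u / (B.card : ℝ)) * (G.dist u v : ℝ)
          ≤ ∑ v ∈ B, (β u / (B.card : ℝ)) * cf u := by
            apply sum_le_sum
            intro v hv
            exact mul_le_mul_of_nonneg_left (hdB u hu v hv)
              (div_nonneg (hbetann u hu) (Nat.cast_nonneg _))
        _ = (B.card : ℝ) * ((β u / (B.card : ℝ)) * cf u) := by
            rw [sum_const, nsmul_eq_mul]
        _ ≤ β u * cf u := by
            rcases eq_or_ne ((B.card : ℝ)) 0 with h | h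
            · rw [h, zero_mul]
              exact mul_nonneg (hbetann u hu) (hcf0 u)
            · rw [← mul_assoc, mul_comm ((B.card : ℝ)), div_mul_cancel₀ _ h]
    rw [h1, h3, add_zero]
    linarith
  -- the total cost
  set Cst : ℝ := ∑ u, ∑ v, π u v * (G.dist u v : ℝ) with hCdef
  have hCsum : Cst = ∑ u ∈ Nx, ∑ v, π u v * (G.dist u v : ℝ) := by
    rw [hCdef]
    symm
    apply sum_subset (subset_univ Nx)
    intro u _ hu
    apply sum_eq_zero
    intro v _
    rw [hpidef]
    dsimp only
    rw [if_neg hu, zero_mul, zero_mul]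
  have hcfA : ∀ u ∈ A, cf u = 3 := by
    intro u hu
    rw [hcfdef]
    dsimp only
    rw [if_neg (hAnoty u hu).1, if_neg (hAnoty u hu).2]
  have hcfT : ∀ u ∈ T, cf u = 2 := by
    intro u hu
    rw [hcfdef]
    dsimp only
    rw [if_neg (fun h : u = y => hyT (h ▸ hu)), if_pos hu]
  have hcfy : cf y = 1 := by
    rw [hcfdef]; dsimp only; rw [if_pos rfl]
  have hsumAbeta : ∑ u ∈ A, β u = Am - a1 := by
    have hb : ∀ u ∈ A, β u = p - ξ u := by
      intro u hu
      rw [hbetadef]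
      dsimp only
      rw [if_neg (hAnoty u hu).2]
      ring
    rw [sum_congr rfl hb, sum_sub_distrib, sum_const, nsmul_eq_mul, hsumA, hAmdef]
  have hsumTbeta : ∑ u ∈ T, β u = Tc - a2 := by
    have hb : ∀ u ∈ T, β u = (p - q) - ξ u := by
      intro u hu
      rw [hbetadef]
      dsimp only
      rw [if_pos hu]
      ring
    rw [sum_congr rfl hb, sum_sub_distrib, sum_const, nsmul_eq_mul, hsumT, hTcdef, htRdef]
  have hbetay : β y = p - a3 := by
    rw [hbetadef]
    dsimp only
    rw [hxiy, if_neg hyT]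
    ring
  have htotal : ∑ u ∈ Nx, (ξ u + β u * cf u)
      = q + ((Am - a1) * 3 + ((p - a3) * 1 + (Tc - a2) * 2)) := by
    rw [sum_add_distrib, hsumXi]
    congr 1
    rw [hsplit (fun u => β u * cf u)]
    have hA3 : ∑ u ∈ A, β u * cf u = (Am - a1) * 3 := by
      rw [← hsumAbeta, sum_mul]
      exact sum_congr rfl (fun u hu => by rw [hcfA u hu])
    have hT2 : ∑ u ∈ T, β u * cf u = (Tc - a2) * 2 := by
      rw [← hsumTbeta, sum_mul]
      exact sum_congr rfl (fun u hu => by rw [hcfT u hu])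
    rw [hA3, hT2, hcfy, hbetay]
  have hCle : Cst ≤ q + ((Am - a1) * 3 + ((p - a3) * 1 + (Tc - a2) * 2)) := by
    rw [hCsum, ← htotal]
    exact sum_le_sum hinner
  -- W1 is at most the cost of the explicit coupling
  have hW1 : W1 G (mUnif G x) (mUnif G y) ≤ Cst := by
    rw [W1]
    apply csInf_le
    · refine ⟨0, ?_⟩
      rintro c ⟨π', h1, h2, h3, rfl⟩
      apply sum_nonneg
      intro u _
      apply sum_nonneg
      intro v _
      exact mul_nonneg (h1 u v) (Nat.cast_nonneg _)
    · exact ⟨π, hpinn, hrow, hcol, hCdef⟩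
  -- final arithmetic
  have harith := arith_bound p q tR Am hq0 hqp
    (by rw [hAmdef, hAR]; linear_combination hdxp) htR0
    (by calc (tR + 1) * q ≤ dy * q := mul_le_mul_of_nonneg_right htdy hq0.le
          _ = 1 := hdyq)
  rw [← ha1def, ← hTcdef, ← ha2def, ← ha3def] at harith
  have hdivx : tR / dx = tR * p := by rw [hpdef]; ring
  have hdivy : tR / dy = tR * q := by rw [hqdef]; ring
  rw [hdivx, hdivy]
  linarith only [hW1, hCle, harith]


lemma W1_symm {V : Type*} [Fintype V] (G : SimpleGraph V) (μ ν : V → ℝ) :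
    W1 G μ ν = W1 G ν μ := by
  have key : ∀ (μ ν : V → ℝ) (c : ℝ),
      (∃ π : V → V → ℝ, (∀ a b, 0 ≤ π a b) ∧
        (∀ a, ∑ b, π a b = μ a) ∧ (∀ b, ∑ a, π a b = ν b) ∧
        c = ∑ a, ∑ b, π a b * (G.dist a b : ℝ)) →
      (∃ π : V → V → ℝ, (∀ a b, 0 ≤ π a b) ∧
        (∀ a, ∑ b, π a b = ν a) ∧ (∀ b, ∑ a, π a b = μ b) ∧
        c = ∑ a, ∑ b, π a b * (G.dist a b : ℝ)) := by
    rintro μ ν c ⟨π, h1, h2, h3, rfl⟩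
    refine ⟨fun a b => π b a, fun a b => h1 b a, h3, h2, ?_⟩
    rw [Finset.sum_comm]
    exact Finset.sum_congr rfl fun a _ => Finset.sum_congr rfl fun b _ => by
      rw [SimpleGraph.dist_comm]
  unfold W1
  congr 1
  ext c
  exact ⟨key μ ν c, key ν μ c⟩

/-- Jost–Liu lower bound for the Ollivier-Ricci curvature κ(x,y) = 1 - W₁(m_x, m_y) of an
edge (x,y): κ(x,y) ≥ -(1 - 1/d_x - 1/d_y - #(x,y)/(d_x ⊓ d_y))₊
- (1 - 1/d_x - 1/d_y - #(x,y)/(d_x ⊔ d_y))₊ + #(x,y)/(d_x ⊔ d_y). -/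
theorem orc_lower_bound {V : Type*} [Fintype V] [DecidableEq V]
    (G : SimpleGraph V) [DecidableRel G.Adj] (hconn : G.Connected)
    (x y : V) (hxy : G.Adj x y) :
    let dx : ℝ := (G.degree x : ℝ)
    let dy : ℝ := (G.degree y : ℝ)
    let tri : ℝ := ((G.neighborFinset x ∩ G.neighborFinset y).card : ℝ)
    1 - W1 G (mUnif G x) (mUnif G y) ≥
      -(max (1 - 1/dx - 1/dy - tri / min dx dy) 0)
      - (max (1 - 1/dx - 1/dy - tri / max dx dy) 0)
      + tri / max dx dy := by

  intro dx dy tri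
  rcases le_total (G.degree x) (G.degree y) with h | h
  · have hb := coupling_bound G hconn x y hxy h
    have hcast : dx ≤ dy := Nat.cast_le.mpr h
    have hmin : min dx dy = dx := min_eq_left hcast
    have hmax : max dx dy = dy := max_eq_right hcast
    rw [hmin, hmax]
    have hdx : dx = (G.degree x : ℝ) := rfl
    have hdy : dy = (G.degree y : ℝ) := rfl
    have htri : tri = ((G.neighborFinset x ∩ G.neighborFinset y).card : ℝ) := rfl
    rw [hdx, hdy, htri]
    ring_nf at hb ⊢
    linarith only [hb]
  · have hb := coupling_bound G hconn y x hxy.symm h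
    have hsymm : W1 G (mUnif G x) (mUnif G y) = W1 G (mUnif G y) (mUnif G x) :=
      W1_symm G _ _
    have hinter : G.neighborFinset y ∩ G.neighborFinset x
        = G.neighborFinset x ∩ G.neighborFinset y := Finset.inter_comm _ _
    rw [hinter] at hb
    have hcast : dy ≤ dx := Nat.cast_le.mpr h
    have hmin : min dx dy = dy := min_eq_right hcast
    have hmax : max dx dy = dx := max_eq_left hcast
    rw [hmin, hmax, hsymm]
    have hdx : dx = (G.degree x : ℝ) := rfl
    have hdy : dy = (G.degree y : ℝ) := rfl
    have htri : tri = ((G.neighborFinset x ∩ G.neighborFinset y).card : ℝ) := rfl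
    rw [hdx, hdy, htri]
    ring_nf at hb ⊢
    linarith only [hb]
end
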